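/- Let S be a numerical semigroup and u ∈ S nonzero, with Ap(S;u) = {w₀ < w₁ < ⋯ < w_{u−1}}. Then S is symmetric if and only if for every w ∈ Ap(S;u), w_{u−1} − w ∈ S (equivalently, w ≼ w_{u−1} in the divisibility order of S). -/
import Mathlib


open Finset

/-- The set of factorizations of `n` over the generating tuple `g`. -/
def Fac {t : ℕ} (g : Fin (t + 1) → ℕ) (n : ℕ) : Set (Fin (t + 1) → ℕ) :=
  {c | ∑ i, c i * g i = n}

/-- The numerical semigroup generated by the tuple `g`. -/
def Sg {t : ℕ} (g : Fin (t + 1) → ℕ) : Set ℕ :=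
  {n | ∃ c : Fin (t + 1) → ℕ, ∑ i, c i * g i = n}

/-- The order of `n`: the maximal length of a factorization of `n` over `g`. -/
noncomputable def ordOf {t : ℕ} (g : Fin (t + 1) → ℕ) (n : ℕ) : ℕ :=
  sSup {r | ∃ c ∈ Fac g n, ∑ i, c i = r}

/-- The minimal length of a factorization of `n` over `g`. -/
noncomputable def minordOf {t : ℕ} (g : Fin (t + 1) → ℕ) (n : ℕ) : ℕ :=
  sInf {r | ∃ c ∈ Fac g n, ∑ i, c i = r}

/-- The denumerant of `n` with respect to `g`. -/
noncomputable def denum {t : ℕ} (g : Fin (t + 1) → ℕ) (n : ℕ) : ℕ :=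
  (Fac g n).ncard

/-- The maximal denumerant of an element: the number of maximal-length factorizations. -/
noncomputable def dmaxEl {t : ℕ} (g : Fin (t + 1) → ℕ) (n : ℕ) : ℕ :=
  {c ∈ Fac g n | ∑ i, c i = ordOf g n}.ncard

/-- The maximal denumerant of the semigroup generated by `g`. -/
noncomputable def dmax {t : ℕ} (g : Fin (t + 1) → ℕ) : ℕ :=
  sSup {m | ∃ n ∈ Sg g, dmaxEl g n = m}

/-- The generating tuple `D` of the blowup: `{e, a₁ - e, …, a_t - e}`. -/
def blowD {t : ℕ} (g : Fin (t + 1) → ℕ) : Fin (t + 1) → ℕ :=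
  fun i => if i = 0 then g 0 else g i - g 0

/-- The adjustment of `n`:  `n - ord(n) * e`. -/
noncomputable def adj {t : ℕ} (g : Fin (t + 1) → ℕ) (n : ℕ) : ℕ :=
  n - ordOf g n * g 0

/-- The Apery set with respect to `u` of the semigroup generated by `g`. -/
def Ap {t : ℕ} (g : Fin (t + 1) → ℕ) (u : ℕ) : Set ℕ :=
  {w ∈ Sg g | ¬ ∃ b ∈ Sg g, w = b + u}

/-- `g` is the (strictly increasing) minimal generating tuple of a numerical semigroup
with multiplicity `g 0`. -/
structure IsNumSgp {t : ℕ} (g : Fin (t + 1) → ℕ) : Prop where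
  mono : StrictMono g
  pos : 0 < g 0
  gcd_eq_one : Finset.gcd Finset.univ g = 1
  minimal : ∀ i, ∀ c : Fin (t + 1) → ℕ, ∑ j, c j * g j = g i → c = Pi.single i 1

/-- `S` is additive: `ord(u + e) = ord(u) + 1` for all `u ∈ S`. -/
def IsAdditive {t : ℕ} (g : Fin (t + 1) → ℕ) : Prop :=
  ∀ u ∈ Sg g, ordOf g (u + g 0) = ordOf g u + 1

/-- Membership of an integer in a set of naturals. -/
def ZMem (T : Set ℕ) (z : ℤ) : Prop := 0 ≤ z ∧ z.toNat ∈ T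

/-- The Frobenius number: the largest integer not in `T`. -/
noncomputable def Frob (T : Set ℕ) : ℤ := sSup {z : ℤ | ¬ ZMem T z}

/-- `T` is symmetric: whenever `x + y = F(T)`, exactly one of `x`, `y` lies in `T`. -/
def Symm (T : Set ℕ) : Prop := ∀ x y : ℤ, x + y = Frob T → (ZMem T x ↔ ¬ ZMem T y)

/-- An abstract numerical semigroup. -/
structure IsNumSemigroup (T : Set ℕ) : Prop where
  zero_mem : 0 ∈ T
  add_mem : ∀ a ∈ T, ∀ b ∈ T, a + b ∈ T
  cofinite : Tᶜ.Finite

/-- The Apery set of an abstract numerical semigroup. -/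
def ApS (T : Set ℕ) (u : ℕ) : Set ℕ := {w ∈ T | ¬ ∃ b ∈ T, w = b + u}

/-- Proposition 4.5, (1) ↔ (3): `S` is symmetric iff every element of `Ap(S;u)` divides
the largest element `w_{u-1}` in the order `≼`. -/
theorem stmt10 (T : Set ℕ) (hT : IsNumSemigroup T) (u : ℕ) (hu : u ∈ T) (hu0 : u ≠ 0)
    (w : Fin u → ℕ) (hw : StrictMono w) (hrange : Set.range w = ApS T u) :
    Symm T ↔
      ∀ x ∈ ApS T u, ∃ s ∈ T, x + s = w ⟨u - 1, by omega⟩ := by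
  have hGne : ({z : ℤ | ¬ ZMem T z}).Nonempty :=
    ⟨-1, fun h => by exact absurd h.1 (by norm_num)⟩
  have hbdd : BddAbove {z : ℤ | ¬ ZMem T z} := by
    obtain ⟨N, hN⟩ := hT.cofinite.bddAbove
    refine ⟨(N : ℤ), fun z hz => ?_⟩
    rcases le_or_gt 0 z with h0 | h0
    · have h1 : z.toNat ∉ T := fun ht => hz ⟨h0, ht⟩
      have := hN h1
      omega
    · omega
  have hF_not : ¬ ZMem T (Frob T) := Int.csSup_mem hGne hbdd
  have hFge : (-1 : ℤ) ≤ Frob T :=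
    le_csSup hbdd (show (-1:ℤ) ∈ {z : ℤ | ¬ ZMem T z} from fun h => absurd h.1 (by norm_num))
  have hgt : ∀ z : ℤ, Frob T < z → ZMem T z := by
    intro z hz
    by_contra h
    exact absurd (le_csSup hbdd h) (not_le.mpr hz)
  have hB : ∀ n : ℕ, Frob T < (n : ℤ) → n ∈ T := by
    intro n hn
    have := (hgt n hn).2
    simpa using this
  have hle : ∀ n : ℕ, n ∉ T → (n : ℤ) ≤ Frob T := by
    intro n hn
    exact le_csSup hbdd (fun h => hn (by simpa using h.2))
  -- the top Apery element
  set W : ℕ := (Frob T + u).toNat with hW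
  have hWz : (W : ℤ) = Frob T + u := by
    have : 0 ≤ Frob T + u := by omega
    omega
  have hWT : W ∈ T := hB W (by omega)
  have hWAp : W ∈ ApS T u := by
    refine ⟨hWT, ?_⟩
    rintro ⟨b, hb, hbe⟩
    have : (b : ℤ) = Frob T := by omega
    exact hF_not ⟨by omega, by rw [show (Frob T).toNat = b by omega]; exact hb⟩
  have hWmax : ∀ m ∈ ApS T u, m ≤ W := by
    intro m hm
    by_contra hc
    push_neg at hc
    have h1 : m - u ∈ T := hB (m - u) (by omega)
    exact hm.2 ⟨m - u, h1, by omega⟩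
  have hkey : w ⟨u - 1, by omega⟩ = W := by
    obtain ⟨j, hj⟩ : W ∈ Set.range w := hrange ▸ hWAp
    have hwin : w ⟨u - 1, by omega⟩ ∈ ApS T u := hrange ▸ Set.mem_range_self _
    have h1 : w ⟨u - 1, by omega⟩ ≤ w j := hj ▸ hWmax _ hwin
    have h2 : (⟨u - 1, by omega⟩ : Fin u) ≤ j := by
      by_contra hc
      push_neg at hc
      exact absurd h1 (not_le.mpr (hw hc))
    have h3 : j = ⟨u - 1, by omega⟩ := by
      have h2' : u - 1 ≤ (j : ℕ) := by simpa [Fin.le_def] using h2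
      have := j.isLt
      exact Fin.ext (show (j : ℕ) = u - 1 by omega)
    rw [← hj, h3]
  have hmul : ∀ k : ℕ, k * u ∈ T := by
    intro k
    induction k with
    | zero => simpa using hT.zero_mem
    | succ n ih => 
      have := hT.add_mem _ ih _ hu
      simpa [Nat.succ_mul] using this
  constructor
  · -- symmetric → divisibility
    intro hsym x hx
    have hxu : ¬ ZMem T ((x : ℤ) - u) := by
      rintro ⟨h0, hmem⟩
      exact hx.2 ⟨((x:ℤ) - u).toNat, hmem, by omega⟩
    have hy : ZMem T (Frob T + u - x) :=
      not_not.mp (fun h => hxu ((hsym ((x:ℤ) - u) (Frob T + u - x) (by ring)).mpr h))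
    refine ⟨(Frob T + u - (x:ℤ)).toNat, hy.2, ?_⟩
    have h0 := hy.1
    omega
  · -- divisibility → symmetric
    intro hdiv
    have hclaim : ∀ z : ℕ, z ∉ T → (Frob T - z).toNat ∈ T := by
      intro z hz
      classical
      have hex : ∃ m : ℕ, z + m * u ∈ T := by
        refine ⟨(Frob T).toNat + 1, hB _ ?_⟩
        have h2 : Frob T ≤ ((Frob T).toNat : ℤ) := Int.self_le_toNat _
        have h1 : (((Frob T).toNat : ℤ) + 1) * 1 ≤ (((Frob T).toNat : ℤ) + 1) * u := by
          apply mul_le_mul_of_nonneg_left ?_ (by positivity)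
          exact_mod_cast Nat.one_le_iff_ne_zero.mpr hu0
        push_cast
        omega
      set m := Nat.find hex with hm
      have hmT : z + m * u ∈ T := Nat.find_spec hex
      have hm1 : 1 ≤ m := by
        rcases Nat.eq_zero_or_pos m with h | h
        · exact absurd (by simpa [h] using hmT) hz
        · exact h
      have hmu : m * u = (m - 1) * u + u := by
        have hm' : m = (m - 1) + 1 := by omega
        calc m * u = ((m - 1) + 1) * u := by rw [← hm']
          _ = (m - 1) * u + u := by ring
      have hAp : z + m * u ∈ ApS T u := by
        refine ⟨hmT, ?_⟩
        rintro ⟨b, hb, hbe⟩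
        have hb' : b = z + (m - 1) * u := by omega
        exact Nat.find_min hex (show m - 1 < m by omega) (hb' ▸ hb)
      obtain ⟨s, hsT, hse⟩ := hdiv _ hAp
      rw [hkey] at hse
      have hzle : (z : ℤ) ≤ Frob T := hle z hz
      have heq : (Frob T - z).toNat = s + (m - 1) * u := by omega
      rw [heq]
      exact hT.add_mem _ hsT _ (hmul _)
    intro x y hxy
    constructor
    · rintro ⟨hx0, hxT⟩ ⟨hy0, hyT⟩
      have : (x + y).toNat ∈ T := by
        have := hT.add_mem _ hxT _ hyT
        have he : (x + y).toNat = x.toNat + y.toNat := by omega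
        rwa [he]
      exact hF_not ⟨by omega, hxy ▸ this⟩
    · intro hny
      by_contra hnx
      rcases le_or_gt 0 x with h0 | h0
      · have hxT : x.toNat ∉ T := fun h => hnx ⟨h0, h⟩
        have hzle : ((x.toNat : ℕ) : ℤ) ≤ Frob T := hle _ hxT
        have := hclaim x.toNat hxT
        refine hny ⟨by omega, ?_⟩
        have : y.toNat = (Frob T - x.toNat).toNat := by omega
        rw [this]
        exact hclaim x.toNat hxT
      · have : ZMem T y := hgt y (by omega)
        exact hny this
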